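/- Let C be a category with all morphisms monic. An ind-object Ω of C that is universal (every object of C embeds into Ω) is f-injective if and only if it is homogeneous (every isomorphism γ : X → Y between objects of C, together with embeddings α : X → Ω and β : Y → Ω, can be intertwined by an automorphism σ of Ω satisfying σ ∘ α = β ∘ γ). -/
import Mathlib


open CategoryTheory

universe u v

/-- An ind-object of a category `C`: a sequential diagram `X₁ → X₂ → ⋯` in `C`. -/
structure IndObject (C : Type u) [Category.{v} C] where
  obj : ℕ → C
  map : ∀ n : ℕ, obj n ⟶ obj (n + 1)

namespace IndObject

variable {C : Type u} [Category.{v} C]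

/-- The transition morphism `obj n ⟶ obj m` of an ind-object, for `n ≤ m`. -/
def trans (Ω : IndObject C) : ∀ {n m : ℕ}, n ≤ m → (Ω.obj n ⟶ Ω.obj m) :=
  fun {n m} h =>
    Nat.leRecOn (C := fun m => Ω.obj n ⟶ Ω.obj m) h (fun {l} g => g ≫ Ω.map l) (𝟙 _)

/-- An ind-object is universal if every object of `C` embeds into it. -/
def Universal (Ω : IndObject C) : Prop :=
  ∀ X : C, ∃ n : ℕ, Nonempty (X ⟶ Ω.obj n)

/-- An ind-object is f-injective if every embedding of an object of `C` into it extends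
along any morphism of `C`. -/
def FInjective (Ω : IndObject C) : Prop :=
  ∀ ⦃X Y : C⦄ (α : X ⟶ Y) (n : ℕ) (γ : X ⟶ Ω.obj n),
    ∃ (m : ℕ) (h : n ≤ m) (β : Y ⟶ Ω.obj m), α ≫ β = γ ≫ Ω.trans h

end IndObject


/-- An isomorphism of ind-objects: compatible families of morphisms in both directions
whose composites are the transition maps. -/
structure IndIso {C : Type u} [Category.{v} C] (Ω Ω' : IndObject C) where
  a : ℕ → ℕ
  b : ℕ → ℕ
  amono : Monotone a
  bmono : Monotone b
  fwd : ∀ n : ℕ, Ω.obj n ⟶ Ω'.obj (a n)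
  bwd : ∀ n : ℕ, Ω'.obj n ⟶ Ω.obj (b n)
  fwd_comm : ∀ {n m : ℕ} (h : n ≤ m), Ω.trans h ≫ fwd m = fwd n ≫ Ω'.trans (amono h)
  bwd_comm : ∀ {n m : ℕ} (h : n ≤ m), Ω'.trans h ≫ bwd m = bwd n ≫ Ω.trans (bmono h)
  le_ba : ∀ n : ℕ, n ≤ b (a n)
  le_ab : ∀ n : ℕ, n ≤ a (b n)
  fwd_bwd : ∀ n : ℕ, fwd n ≫ bwd (a n) = Ω.trans (le_ba n)
  bwd_fwd : ∀ n : ℕ, bwd n ≫ fwd (b n) = Ω'.trans (le_ab n)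


/-- An ind-object is homogeneous if every isomorphism `γ : X ≅ Y` of objects of `C`
equipped with embeddings into the ind-object can be intertwined by an automorphism. -/
def Homogeneous {C : Type u} [Category.{v} C] (Ω : IndObject C) : Prop :=
  ∀ ⦃X Y : C⦄ (γ : X ≅ Y) (n m : ℕ) (α : X ⟶ Ω.obj n) (β : Y ⟶ Ω.obj m),
    ∃ (σ : IndIso Ω Ω) (h : m ≤ σ.a n), α ≫ σ.fwd n = γ.hom ≫ β ≫ Ω.trans h

namespace IndObject

variable {C : Type u} [Category.{v} C]

lemma trans_refl (Ω : IndObject C) {n : ℕ} (h : n ≤ n) : Ω.trans h = 𝟙 _ :=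
  Nat.leRecOn_self _

lemma trans_succ (Ω : IndObject C) {n m : ℕ} (h : n ≤ m) (h' : n ≤ m + 1) :
    Ω.trans h' = Ω.trans h ≫ Ω.map m :=
  Nat.leRecOn_succ h _

lemma trans_trans (Ω : IndObject C) {n m l : ℕ} (h1 : n ≤ m) (h2 : m ≤ l) :
    Ω.trans h1 ≫ Ω.trans h2 = Ω.trans (h1.trans h2) := by
  induction l, h2 using Nat.le_induction with
  | base => rw [trans_refl, Category.comp_id]
  | succ l hl ih =>
      rw [trans_succ Ω hl, trans_succ Ω (h1.trans hl) (h1.trans (hl.trans (Nat.le_succ l))),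
        ← Category.assoc, ih]

lemma trans_trans_assoc (Ω : IndObject C) {n m l : ℕ} (h1 : n ≤ m) (h2 : m ≤ l)
    {Z : C} (x : Ω.obj l ⟶ Z) :
    Ω.trans h1 ≫ Ω.trans h2 ≫ x = Ω.trans (h1.trans h2) ≫ x := by
  rw [← Category.assoc, trans_trans]

lemma map_eq_trans (Ω : IndObject C) (n : ℕ) : Ω.map n = Ω.trans (Nat.le_succ n) := by
  rw [trans_succ Ω (le_refl n), trans_refl, Category.id_comp]

/-- One partial stage of the back-and-forth construction: a map `f` from level `p`
of the ind-object to level `q`. -/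
structure BFStage (Ω : IndObject C) where
  p : ℕ
  q : ℕ
  f : Ω.obj p ⟶ Ω.obj q

/-- The back-and-forth step: any stage can be extended to a further stage, with a
"backwards" map `g` splitting both. -/
lemma bf_step (Ω : IndObject C) (hF : Ω.FInjective) (s : BFStage Ω) :
    ∃ (s' : BFStage Ω) (g : Ω.obj s.q ⟶ Ω.obj s'.p) (hp : s.p < s'.p) (hq : s.q < s'.q),
      s.f ≫ g = Ω.trans hp.le ∧ g ≫ s'.f = Ω.trans hq.le := by
  obtain ⟨p', hp', g, hg⟩ := hF s.f (s.p + 1) (Ω.map s.p)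
  obtain ⟨m'', hq'', f', hf'⟩ := hF g s.q (𝟙 _)
  refine ⟨⟨p', max m'' (s.q + 1), f' ≫ Ω.trans (le_max_left m'' (s.q + 1))⟩, g, hp',
    lt_of_lt_of_le (Nat.lt_succ_self _) (le_max_right _ _), ?_, ?_⟩
  · rw [hg, map_eq_trans, trans_trans]
  · rw [← Category.assoc, hf', Category.id_comp, trans_trans]

/-- An f-injective ind-object is homogeneous. -/
lemma homogeneous_of_fInjective (Ω : IndObject C) (hF : Ω.FInjective) : Homogeneous Ω := by
  intro X Y γ n m α β
  obtain ⟨m₀, hm₀, f0, hf0⟩ := hF α m (γ.hom ≫ β)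
  let next : BFStage Ω → BFStage Ω := fun s => (bf_step Ω hF s).choose
  let S : ℕ → BFStage Ω := fun k =>
    Nat.rec (motive := fun _ => BFStage Ω) ⟨n, m₀, f0⟩ (fun _ s => next s) k
  let g : ∀ k, Ω.obj (S k).q ⟶ Ω.obj (S (k + 1)).p :=
    fun k => (bf_step Ω hF (S k)).choose_spec.choose
  have hstep : ∀ k, ∃ (hp : (S k).p < (S (k + 1)).p) (hq : (S k).q < (S (k + 1)).q),
      (S k).f ≫ g k = Ω.trans hp.le ∧ g k ≫ (S (k + 1)).f = Ω.trans hq.le :=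
    fun k => (bf_step Ω hF (S k)).choose_spec.choose_spec
  have hplt : ∀ k, (S k).p < (S (k + 1)).p := fun k => (hstep k).choose
  have hqlt : ∀ k, (S k).q < (S (k + 1)).q := fun k => (hstep k).choose_spec.choose
  have hfg : ∀ k, (S k).f ≫ g k = Ω.trans (hplt k).le :=
    fun k => (hstep k).choose_spec.choose_spec.1
  have hgf : ∀ k, g k ≫ (S (k + 1)).f = Ω.trans (hqlt k).le :=
    fun k => (hstep k).choose_spec.choose_spec.2
  have hpsm : StrictMono fun k => (S k).p := strictMono_nat_of_lt_succ hplt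
  have hqsm : StrictMono fun k => (S k).q := strictMono_nat_of_lt_succ hqlt
  have hpk : ∀ k, k ≤ (S k).p := fun k => hpsm.le_apply
  have hqk : ∀ k, k ≤ (S k).q := fun k => hqsm.le_apply
  have fcompat : ∀ k l (h : k ≤ l),
      Ω.trans (hpsm.monotone h) ≫ (S l).f = (S k).f ≫ Ω.trans (hqsm.monotone h) := by
    intro k l h
    induction l, h using Nat.le_induction with
    | base => rw [trans_refl, trans_refl, Category.id_comp, Category.comp_id]
    | succ l hl ih =>
        have h1 : Ω.trans (hplt l).le ≫ (S (l + 1)).f = (S l).f ≫ Ω.trans (hqlt l).le := by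
          rw [← hfg l, Category.assoc, hgf l]
        calc Ω.trans (hpsm.monotone (hl.trans (Nat.le_succ l))) ≫ (S (l + 1)).f
            = Ω.trans (hpsm.monotone hl) ≫ Ω.trans (hplt l).le ≫ (S (l + 1)).f := by
              rw [trans_trans_assoc]
          _ = Ω.trans (hpsm.monotone hl) ≫ (S l).f ≫ Ω.trans (hqlt l).le := by rw [h1]
          _ = ((S k).f ≫ Ω.trans (hqsm.monotone hl)) ≫ Ω.trans (hqlt l).le := by
              rw [← Category.assoc, ih]
          _ = (S k).f ≫ Ω.trans (hqsm.monotone (hl.trans (Nat.le_succ l))) := by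
              rw [Category.assoc, trans_trans]
  have gcompat : ∀ k l (h : k ≤ l),
      Ω.trans (hqsm.monotone h) ≫ g l = g k ≫ Ω.trans (hpsm.monotone (Nat.succ_le_succ h)) := by
    intro k l h
    induction l, h using Nat.le_induction with
    | base => rw [trans_refl, trans_refl, Category.id_comp, Category.comp_id]
    | succ l hl ih =>
        have h1 : Ω.trans (hqlt l).le ≫ g (l + 1) = g l ≫ Ω.trans (hplt (l + 1)).le := by
          rw [← hgf l, Category.assoc, hfg (l + 1)]
        calc Ω.trans (hqsm.monotone (hl.trans (Nat.le_succ l))) ≫ g (l + 1)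
            = Ω.trans (hqsm.monotone hl) ≫ Ω.trans (hqlt l).le ≫ g (l + 1) := by
              rw [trans_trans_assoc]
          _ = Ω.trans (hqsm.monotone hl) ≫ g l ≫ Ω.trans (hplt (l + 1)).le := by rw [h1]
          _ = (g k ≫ Ω.trans (hpsm.monotone (Nat.succ_le_succ hl))) ≫
                Ω.trans (hplt (l + 1)).le := by
              rw [← Category.assoc, ih]
          _ = g k ≫ Ω.trans (hpsm.monotone (Nat.succ_le_succ (hl.trans (Nat.le_succ l)))) := by
              rw [Category.assoc, trans_trans]
  refine ⟨⟨fun k => (S k).q, fun k => (S (k + 1)).p, hqsm.monotone,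
    fun _ _ h => hpsm.monotone (Nat.succ_le_succ h),
    fun k => Ω.trans (hpk k) ≫ (S k).f,
    fun k => Ω.trans (hqk k) ≫ g k, ?_, ?_, ?_, ?_, ?_, ?_⟩, ?_, ?_⟩
  · -- fwd_comm
    intro k l h
    show Ω.trans h ≫ Ω.trans (hpk l) ≫ (S l).f
        = (Ω.trans (hpk k) ≫ (S k).f) ≫ Ω.trans (hqsm.monotone h)
    calc Ω.trans h ≫ Ω.trans (hpk l) ≫ (S l).f
        = Ω.trans ((hpk k).trans (hpsm.monotone h)) ≫ (S l).f := by rw [trans_trans_assoc]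
      _ = Ω.trans (hpk k) ≫ Ω.trans (hpsm.monotone h) ≫ (S l).f := by rw [trans_trans_assoc]
      _ = Ω.trans (hpk k) ≫ (S k).f ≫ Ω.trans (hqsm.monotone h) := by rw [fcompat k l h]
      _ = (Ω.trans (hpk k) ≫ (S k).f) ≫ Ω.trans (hqsm.monotone h) := by rw [Category.assoc]
  · -- bwd_comm
    intro k l h
    show Ω.trans h ≫ Ω.trans (hqk l) ≫ g l
        = (Ω.trans (hqk k) ≫ g k) ≫ Ω.trans (hpsm.monotone (Nat.succ_le_succ h))
    calc Ω.trans h ≫ Ω.trans (hqk l) ≫ g l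
        = Ω.trans ((hqk k).trans (hqsm.monotone h)) ≫ g l := by rw [trans_trans_assoc]
      _ = Ω.trans (hqk k) ≫ Ω.trans (hqsm.monotone h) ≫ g l := by rw [trans_trans_assoc]
      _ = Ω.trans (hqk k) ≫ g k ≫ Ω.trans (hpsm.monotone (Nat.succ_le_succ h)) := by
          rw [gcompat k l h]
      _ = (Ω.trans (hqk k) ≫ g k) ≫ Ω.trans (hpsm.monotone (Nat.succ_le_succ h)) := by
          rw [Category.assoc]
  · -- le_ba
    exact fun k => (hqk k).trans ((Nat.le_succ _).trans (hpk _))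
  · -- le_ab
    exact fun k => (Nat.le_succ k).trans ((hpk (k + 1)).trans (hqk _))
  · -- fwd_bwd
    intro k
    show (Ω.trans (hpk k) ≫ (S k).f) ≫ Ω.trans (hqk ((S k).q)) ≫ g ((S k).q) = _
    calc (Ω.trans (hpk k) ≫ (S k).f) ≫ Ω.trans (hqk ((S k).q)) ≫ g ((S k).q)
        = Ω.trans (hpk k) ≫ ((S k).f ≫ Ω.trans (hqsm.monotone (hqk k))) ≫ g ((S k).q) := by
          simp only [Category.assoc]
      _ = Ω.trans (hpk k) ≫ (Ω.trans (hpsm.monotone (hqk k)) ≫ (S ((S k).q)).f) ≫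
            g ((S k).q) := by rw [fcompat k ((S k).q) (hqk k)]
      _ = Ω.trans (hpk k) ≫ Ω.trans (hpsm.monotone (hqk k)) ≫
            ((S ((S k).q)).f ≫ g ((S k).q)) := by simp only [Category.assoc]
      _ = Ω.trans (hpk k) ≫ Ω.trans (hpsm.monotone (hqk k)) ≫ Ω.trans (hplt ((S k).q)).le := by
          rw [hfg ((S k).q)]
      _ = _ := by rw [trans_trans_assoc, trans_trans]
  · -- bwd_fwd
    intro k
    show (Ω.trans (hqk k) ≫ g k) ≫ Ω.trans (hpk ((S (k + 1)).p)) ≫ (S ((S (k + 1)).p)).f = _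
    calc (Ω.trans (hqk k) ≫ g k) ≫ Ω.trans (hpk ((S (k + 1)).p)) ≫ (S ((S (k + 1)).p)).f
        = Ω.trans (hqk k) ≫ g k ≫
            (Ω.trans (hpsm.monotone (hpk (k + 1))) ≫ (S ((S (k + 1)).p)).f) := by
          simp only [Category.assoc]
      _ = Ω.trans (hqk k) ≫ g k ≫
            ((S (k + 1)).f ≫ Ω.trans (hqsm.monotone (hpk (k + 1)))) := by
          rw [fcompat (k + 1) ((S (k + 1)).p) (hpk (k + 1))]
      _ = Ω.trans (hqk k) ≫ (g k ≫ (S (k + 1)).f) ≫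
            Ω.trans (hqsm.monotone (hpk (k + 1))) := by simp only [Category.assoc]
      _ = Ω.trans (hqk k) ≫ Ω.trans (hqlt k).le ≫ Ω.trans (hqsm.monotone (hpk (k + 1))) := by
          rw [hgf k]
      _ = _ := by rw [trans_trans_assoc, trans_trans]
  · -- the bound
    exact hm₀.trans (hqsm.monotone (Nat.zero_le n))
  · -- the intertwining identity
    show α ≫ Ω.trans (hpk n) ≫ (S n).f = γ.hom ≫ β ≫ Ω.trans _
    have e0 : Ω.trans (hpk n) ≫ (S n).f = f0 ≫ Ω.trans (hqsm.monotone (Nat.zero_le n)) :=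
      fcompat 0 n (Nat.zero_le n)
    calc α ≫ Ω.trans (hpk n) ≫ (S n).f
        = α ≫ f0 ≫ Ω.trans (hqsm.monotone (Nat.zero_le n)) := by rw [e0]
      _ = (α ≫ f0) ≫ Ω.trans (hqsm.monotone (Nat.zero_le n)) := by rw [Category.assoc]
      _ = ((γ.hom ≫ β) ≫ Ω.trans hm₀) ≫ Ω.trans (hqsm.monotone (Nat.zero_le n)) := by
          rw [hf0]
      _ = γ.hom ≫ β ≫ Ω.trans (hm₀.trans (hqsm.monotone (Nat.zero_le n))) := by
          simp only [Category.assoc, trans_trans]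

end IndObject

/-- a universal ind-object of a category with all morphisms monic is
f-injective iff it is homogeneous. -/
theorem stmt_11 (C : Type u) [Category.{v} C]
    (hmono : ∀ {X Y : C} (f : X ⟶ Y), Mono f)
    (Ω : IndObject C) (huniv : Ω.Universal) :
    Ω.FInjective ↔ Homogeneous Ω := by
  constructor
  · exact fun hF => Ω.homogeneous_of_fInjective hF
  · intro hhom X Y α n γ'
    obtain ⟨m, ⟨δ⟩⟩ := huniv Y
    obtain ⟨σ, h, hσ⟩ := hhom (Iso.refl X) m n (α ≫ δ) γ'
    refine ⟨σ.a m, h, δ ≫ σ.fwd m, ?_⟩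
    rw [← Category.assoc, hσ, Iso.refl_hom, Category.id_comp]
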